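/- arXiv:1812.11165 — 2 statements merged into one kernel-verified Lean document; each statement's English description precedes it below -/
import Mathlib

section
/- Let A be a unital C*-algebra and let a ∈ A. Then there exists a sequence (c_n)_{n∈ℕ} in A such that ‖c_n‖ ≤ 1 for all n ∈ ℕ and c_n a converges in norm to |a| as n → ∞. -/
lemma key_ineq (t ε : ℝ) (ht : 0 ≤ t) (hε : 0 < ε) :
    |(Real.sqrt (t + ε))⁻¹ * t - Real.sqrt t| ≤ Real.sqrt ε := by
  rw [mul_comm]
  set s := Real.sqrt t with hs
  set u := Real.sqrt (t + ε) with hu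
  have hu0 : 0 < u := Real.sqrt_pos.2 (by linarith)
  have hs0 : 0 ≤ s := Real.sqrt_nonneg t
  have hs2 : s ^ 2 = t := Real.sq_sqrt ht
  have hu2 : u ^ 2 = t + ε := Real.sq_sqrt (by linarith)
  have hsu : s ≤ u := Real.sqrt_le_sqrt (by linarith)
  have he0 : 0 ≤ Real.sqrt ε := Real.sqrt_nonneg ε
  have he2 : (Real.sqrt ε) ^ 2 = ε := Real.sq_sqrt hε.le
  have hue : u ≤ s + Real.sqrt ε := by nlinarith
  have htu : t * u⁻¹ * u = t := by field_simp
  have hle : t * u⁻¹ ≤ s := by rw [mul_inv_le_iff₀ hu0]; nlinarith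
  rw [abs_le]
  constructor
  · rw [neg_le, neg_sub, sub_le_iff_le_add, ← sub_le_iff_le_add', ← sub_nonneg]
    have h1 : 0 ≤ ((t * u⁻¹ + Real.sqrt ε) - s) * u := by nlinarith
    nlinarith [mul_pos hu0 hu0]
  · nlinarith

lemma sqrt_eq_cfc_real {A : Type*} [CStarAlgebra A] [PartialOrder A] [StarOrderedRing A]
    (b : A) (hb : 0 ≤ b) : CFC.sqrt b = cfc Real.sqrt b := by
  rw [CFC.sqrt_eq_cfc, cfc_nnreal_eq_real _ b hb]
  with_unfolding_all rfl

/-- **Lemma 3.** Let `A` be a unital C*-algebra and `a ∈ A`. Then there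
is a sequence `(cₙ)` in `A` with `‖cₙ‖ ≤ 1` for all `n` such that `cₙ * a` converges in
norm to `|a| = √(a* a)` (the positive square root given by the continuous functional
calculus). -/
theorem exists_contraction_seq_tendsto_abs
    (A : Type*) [CStarAlgebra A] [PartialOrder A] [StarOrderedRing A]
    (a : A) :
    ∃ c : ℕ → A, (∀ n, ‖c n‖ ≤ 1) ∧
      Filter.Tendsto (fun n => c n * a) Filter.atTop (nhds (CFC.sqrt (star a * a))) := by
  set b := star a * a with hbdef
  have hb0 : 0 ≤ b := star_mul_self_nonneg a
  set ε : ℕ → ℝ := fun n => 1 / (n + 1) with hεdef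
  have hεpos : ∀ n, 0 < ε n := fun n => by positivity
  set g : ℕ → ℝ → ℝ := fun n t => (Real.sqrt (t + ε n))⁻¹ with hgdef
  have hspec : ∀ x ∈ spectrum ℝ b, 0 ≤ x := fun x hx =>
    spectrum_nonneg_of_nonneg hb0 hx
  have hcont : ∀ n, ContinuousOn (g n) (spectrum ℝ b) := by
    intro n
    apply ContinuousOn.inv₀
    · exact (Real.continuous_sqrt.comp (by continuity)).continuousOn
    · intro x hx
      exact (Real.sqrt_pos.2 (by have := hspec x hx; have := hεpos n; linarith)).ne'
  have hcont2 : ∀ n, ContinuousOn (fun t => g n t * t) (spectrum ℝ b) :=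
    fun n => (hcont n).mul continuousOn_id
  have hmul : ∀ n, cfc (fun t => g n t * t) b = cfc (g n) b * b := by
    intro n
    calc cfc (fun t => g n t * t) b = cfc (fun t => g n t * id t) b := rfl
      _ = cfc (g n) b * cfc id b := cfc_mul (g n) id b (hcont n) continuousOn_id
      _ = cfc (g n) b * b := by rw [cfc_id ℝ b]
  refine ⟨fun n => cfc (g n) b * star a, ?_, ?_⟩
  · intro n
    set d := cfc (g n) b * star a with hd
    have hsa : IsSelfAdjoint (cfc (g n) b) := cfc_predicate _ b
    have hdd : d * star d = cfc (fun t => g n t * t * g n t) b := by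
      rw [cfc_mul (fun t => g n t * t) (g n) b (hcont2 n) (hcont n), hmul n, hd,
        star_mul, star_star, hsa.star_eq]
      simp only [mul_assoc, hbdef]
    have hnorm : ‖d * star d‖ ≤ 1 := by
      rw [hdd]
      apply norm_cfc_le zero_le_one
      intro x hx
      have hx0 := hspec x hx
      have hxe : 0 < x + ε n := by have := hεpos n; linarith
      have hs : Real.sqrt (x + ε n) * Real.sqrt (x + ε n) = x + ε n :=
        Real.mul_self_sqrt hxe.le
      have hsne : Real.sqrt (x + ε n) ≠ 0 := (Real.sqrt_pos.2 hxe).ne'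
      have heq : g n x * x * g n x = x / (x + ε n) := by
        rw [hgdef]
        field_simp
        rw [Real.sq_sqrt hxe.le]
      rw [heq, Real.norm_eq_abs, abs_of_nonneg (by positivity), div_le_one hxe]
      linarith [(hεpos n)]
    have h2 : ‖d‖ * ‖d‖ ≤ 1 := by rwa [← CStarRing.norm_self_mul_star]
    nlinarith [norm_nonneg d]
  · have key : ∀ n, ‖cfc (g n) b * star a * a - CFC.sqrt b‖ ≤ Real.sqrt (ε n) := by
      intro n
      rw [mul_assoc, ← hbdef, ← hmul n, sqrt_eq_cfc_real b hb0,
        ← cfc_sub (fun t => g n t * t) Real.sqrt b (hcont2 n)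
          Real.continuous_sqrt.continuousOn]
      apply norm_cfc_le (Real.sqrt_nonneg _)
      intro x hx
      rw [Real.norm_eq_abs]
      exact key_ineq x (ε n) (hspec x hx) (hεpos n)
    rw [tendsto_iff_norm_sub_tendsto_zero]
    apply squeeze_zero (fun n => norm_nonneg _) key
    have h1 : Filter.Tendsto ε Filter.atTop (nhds 0) :=
      tendsto_one_div_add_atTop_nhds_zero_nat
    have := (Real.continuous_sqrt.tendsto 0).comp h1
    simpa [Function.comp_def] using this
end

section
/- Let 1 < p < ∞, let J be a set, let A be a unital C*-algebra, and let φ : A → B(l^p(J)) be a unital homomorphism. Let a₀ ∈ A with φ(a₀) ≠ 0. Then there exist x₀ ∈ l^p(J) and a bounded linear functional y₀* on l^p(J) such that ω : A → ℂ defined by ω(a) = y₀*(φ(a)x₀) is a positive linear functional with ω(a₀* a₀) ≠ 0. -/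
open NormedSpace Asymptotics Bornology
open scoped ComplexOrder

section KeyLemma
open NormedSpace Asymptotics Bornology

variable {F : Type*} [NormedAddCommGroup F] [NormedSpace ℂ F] [CompleteSpace F]

theorem keyLemma (T : F →L[ℂ] F) (hT : T ≠ 0) :
    ∃ (x : F) (g : F →L[ℂ] ℂ), x ≠ 0 ∧ ‖g‖ = 1 ∧ g x = (‖x‖ : ℂ) ∧ g (T x) ≠ 0 := by
  by_contra hcon
  push_neg at hcon
  have H : ∀ z : F, z ≠ 0 → ∀ g : F →L[ℂ] ℂ, ‖g‖ = 1 → g z = (‖z‖ : ℂ) → g (T z) = 0 := by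
    intro z hz g hg1 hgz
    exact hcon z g hz hg1 hgz
  -- lower bound
  have C2 : ∀ (z : F) (h : ℂ), z ≠ 0 → ‖z‖ ≤ ‖z + h • T z‖ := by
    intro z h hz
    obtain ⟨g, hg1, hgz⟩ := exists_dual_vector ℂ z (norm_ne_zero_iff.mpr hz)
    have h0 : g (T z) = 0 := H z hz g hg1 hgz
    have e : g (z + h • T z) = (‖z‖ : ℂ) := by
      rw [map_add, map_smul, h0, hgz]; simp
    calc ‖z‖ = ‖g (z + h • T z)‖ := by rw [e]; simp
    _ ≤ ‖g‖ * ‖z + h • T z‖ := g.le_opNorm _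
    _ = ‖z + h • T z‖ := by rw [hg1, one_mul]
  -- upper bound
  have C1 : ∀ (z : F) (h : ℂ), z ≠ 0 → ‖z + h • T z‖ ≤ ‖z‖ + ‖T (T z)‖ * (‖h‖ * ‖h‖) := by
    intro z h hz
    by_cases hw : z + h • T z = 0
    · rw [hw, norm_zero]; positivity
    obtain ⟨g, hg1, hgw⟩ := exists_dual_vector ℂ _ (norm_ne_zero_iff.mpr hw)
    have h0 : g (T (z + h • T z)) = 0 := H _ hw g hg1 hgw
    have hTz : g (T z) = -(h * g (T (T z))) := by
      have e1 : T (z + h • T z) = T z + h • T (T z) := by rw [map_add, map_smul]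
      rw [e1, map_add, map_smul] at h0
      simp only [smul_eq_mul] at h0
      linear_combination h0
    have e2 : g (z + h • T z) = g z - h * h * g (T (T z)) := by
      rw [map_add, map_smul, hTz]; simp only [smul_eq_mul]; ring
    calc ‖z + h • T z‖ = ‖g (z + h • T z)‖ := by rw [hgw]; simp
    _ = ‖g z - h * h * g (T (T z))‖ := by rw [e2]
    _ ≤ ‖g z‖ + ‖h * h * g (T (T z))‖ := norm_sub_le _ _
    _ ≤ ‖z‖ + ‖T (T z)‖ * (‖h‖ * ‖h‖) := by
        have b1 : ‖g z‖ ≤ ‖z‖ := by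
          calc ‖g z‖ ≤ ‖g‖ * ‖z‖ := g.le_opNorm _
          _ = ‖z‖ := by rw [hg1, one_mul]
        have b2 : ‖g (T (T z))‖ ≤ ‖T (T z)‖ := by
          calc ‖g (T (T z))‖ ≤ ‖g‖ * ‖T (T z)‖ := g.le_opNorm _
          _ = ‖T (T z)‖ := by rw [hg1, one_mul]
        have e3 : ‖h * h * g (T (T z))‖ = ‖h‖ * ‖h‖ * ‖g (T (T z))‖ := by
          simp [norm_mul]
        rw [e3]
        nlinarith [norm_nonneg h, norm_nonneg (g (T (T z))), norm_nonneg (T (T z))]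
  -- exp images are nonzero
  have hEx_ne : ∀ (w : ℂ) (x : F), x ≠ 0 → exp (w • T) x ≠ 0 := by
    intro w x hx hzero
    have hcomm : Commute ((-w) • T) (w • T) := ((Commute.refl T).smul_left (-w)).smul_right w
    have hinv : exp ((-w) • T) * exp (w • T) = 1 := by
      rw [← exp_add_of_commute_of_mem_ball (𝕂 := ℂ) hcomm
        ((expSeries_radius_eq_top ℂ (F →L[ℂ] F)).symm ▸ edist_lt_top _ _)
        ((expSeries_radius_eq_top ℂ (F →L[ℂ] F)).symm ▸ edist_lt_top _ _)]
      have e : (-w) • T + w • T = 0 := by rw [neg_smul]; abel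
      rw [e, exp_zero]
    have : x = 0 := by
      have happ : (exp ((-w) • T) * exp (w • T)) x = x := by
        rw [hinv, ContinuousLinearMap.one_apply]
      rw [ContinuousLinearMap.mul_apply, hzero, map_zero] at happ
      exact happ.symm
    exact hx this
  -- derivative
  have hDeriv : ∀ (w : ℂ) (x : F),
      HasDerivAt (fun u : ℂ => exp (u • T) x) (T (exp (w • T) x)) w := by
    intro w x
    have h1 := hasDerivAt_exp_smul_const' (𝕂 := ℂ) T w
    have h2 := h1.clm_apply (hasDerivAt_const w x)
    simpa using h2
  -- norm constancy
  have hconst : ∀ (x : F), x ≠ 0 → ∀ w : ℂ, ‖exp (w • T) x‖ = ‖x‖ := by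
    intro x hx
    have hdiff : ∀ w : ℂ, HasFDerivAt (fun u : ℂ => ‖exp (u • T) x‖) (0 : ℂ →L[ℝ] ℝ) w := by
      intro w
      rw [hasFDerivAt_iff_isLittleO_nhds_zero]
      set z := exp (w • T) x with hzdef
      have hz : z ≠ 0 := hEx_ne w x hx
      have key : ∀ h : ℂ, |‖exp ((w + h) • T) x‖ - ‖z‖| ≤
          ‖T (T z)‖ * (‖h‖ * ‖h‖) + ‖exp ((w + h) • T) x - (z + h • T z)‖ := by
        intro h
        have hup : ‖exp ((w + h) • T) x‖ ≤
            ‖z + h • T z‖ + ‖exp ((w + h) • T) x - (z + h • T z)‖ := by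
          have := norm_sub_norm_le (exp ((w + h) • T) x) (z + h • T z)
          linarith [abs_le.mp (abs_norm_sub_norm_le (exp ((w + h) • T) x) (z + h • T z))]
        have hdown : ‖z + h • T z‖ ≤
            ‖exp ((w + h) • T) x‖ + ‖exp ((w + h) • T) x - (z + h • T z)‖ := by
          linarith [abs_le.mp (abs_norm_sub_norm_le (exp ((w + h) • T) x) (z + h • T z))]
        have h1 := C1 z h hz
        have h2 := C2 z h hz
        rw [abs_le]
        constructor
        · linarith
        · linarith
      -- little-o
      have h2 : (fun h : ℂ => exp ((w + h) • T) x - (z + h • T z)) =o[nhds 0] (fun h => h) := by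
        have hd := hDeriv w x
        rw [hasDerivAt_iff_isLittleO_nhds_zero] at hd
        have : (fun h : ℂ => exp ((w + h) • T) x - (z + h • T z))
            = fun h : ℂ => exp ((w + h) • T) x - exp (w • T) x - h • T z := by
          funext h
          rw [← hzdef]
          abel
        rw [this]
        exact hd
      have h1 : (fun h : ℂ => ‖T (T z)‖ * (‖h‖ * ‖h‖)) =o[nhds 0] (fun h : ℂ => h) := by
        have base : (fun h : ℂ => ‖h‖ * ‖h‖) =o[nhds 0] (fun h : ℂ => h) := by
          rw [isLittleO_iff]
          intro c hc
          filter_upwards [Metric.ball_mem_nhds (0 : ℂ) hc] with h hh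
          rw [Metric.mem_ball, dist_zero_right] at hh
          have : ‖‖h‖ * ‖h‖‖ = ‖h‖ * ‖h‖ := by
            rw [norm_mul]; simp
          rw [this]
          exact mul_le_mul_of_nonneg_right hh.le (norm_nonneg h)
        exact base.const_mul_left _
      have h3 := h1.add h2.norm_left
      have h4 : (fun h : ℂ => ‖exp ((w + h) • T) x‖ - ‖z‖) =O[nhds 0]
          (fun h : ℂ => ‖T (T z)‖ * (‖h‖ * ‖h‖) + ‖exp ((w + h) • T) x - (z + h • T z)‖) := by
        apply IsBigO.of_bound 1
        filter_upwards with h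
        rw [one_mul, Real.norm_eq_abs]
        refine (key h).trans (le_abs_self _)
      have h5 := h4.trans_isLittleO h3
      simpa using h5
    have e0 := fun w : ℂ => is_const_of_fderiv_eq_zero (𝕜 := ℝ)
      (fun u => (hdiff u).differentiableAt) (fun u => (hdiff u).fderiv) w 0
    intro w
    simpa [exp_zero] using e0 w
  -- Liouville endgame
  obtain ⟨x, hx⟩ : ∃ x, T x ≠ 0 := by
    by_contra hc
    push_neg at hc
    exact hT (ContinuousLinearMap.ext fun x => by simp [hc])
  have hx0 : x ≠ 0 := fun h => hx (by simp [h])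
  have hall : ∀ g : F →L[ℂ] ℂ, g (T x) = 0 := by
    intro g
    have hG : ∀ w : ℂ, HasDerivAt (fun w : ℂ => g (exp (w • T) x))
        (g (T (exp (w • T) x))) w :=
      fun w => g.hasFDerivAt.comp_hasDerivAt w (hDeriv w x)
    have hbd : IsBounded (Set.range fun w : ℂ => g (exp (w • T) x)) := by
      rw [isBounded_iff_forall_norm_le]
      refine ⟨‖g‖ * ‖x‖, ?_⟩
      rintro - ⟨w, rfl⟩
      calc ‖g (exp (w • T) x)‖ ≤ ‖g‖ * ‖exp (w • T) x‖ := g.le_opNorm _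
      _ = ‖g‖ * ‖x‖ := by rw [hconst x hx0 w]
    have hcst := Differentiable.apply_eq_apply_of_bounded
      (fun w => (hG w).differentiableAt) hbd
    have hfun : (fun w : ℂ => g (exp (w • T) x)) = fun _ => g x := by
      funext w
      have := hcst w 0
      simpa [exp_zero] using this
    have h0 := hG 0
    rw [hfun] at h0
    have := (hasDerivAt_const (0 : ℂ) (g x)).unique h0
    simpa [exp_zero] using this.symm
  obtain ⟨g, hg1, hgx⟩ := exists_dual_vector ℂ (T x) (norm_ne_zero_iff.mpr hx)
  rw [hall g] at hgx
  apply hx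
  have h0 : ‖T x‖ = 0 := by
    have h1 : ((‖T x‖ : ℝ) : ℂ) = 0 := hgx.symm
    exact_mod_cast h1
  exact norm_eq_zero.mp h0

end KeyLemma

section Renorm

variable {A : Type*} [CStarAlgebra A]
variable {X : Type*} [NormedAddCommGroup X] [NormedSpace ℂ X]

/-- Type synonym for `X`, to be equipped with the norm `max ‖φ.flip z‖ ‖z‖`. -/
def RN (_φ : A →L[ℂ] (X →L[ℂ] X)) : Type _ := X

namespace RN

variable (φ : A →L[ℂ] (X →L[ℂ] X))

instance : AddCommGroup (RN φ) := inferInstanceAs (AddCommGroup X)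
instance : Module ℂ (RN φ) := inferInstanceAs (Module ℂ X)

/-- Identity map to `X`. -/
def toX : RN φ → X := id
/-- Identity map from `X`. -/
def ofX : X → RN φ := id

noncomputable instance : NormedAddCommGroup (RN φ) :=
  AddGroupNorm.toNormedAddCommGroup
    { toFun := fun z => max ‖φ.flip (toX φ z)‖ ‖toX φ z‖
      map_zero' := by
        show max ‖φ.flip (0 : X)‖ ‖(0 : X)‖ = 0
        simp
      add_le' := fun a b => by
        refine max_le ?_ ?_
        · have : φ.flip (toX φ (a + b)) = φ.flip (toX φ a) + φ.flip (toX φ b) := by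
            rw [← map_add]; rfl
          rw [this]
          exact (norm_add_le _ _).trans
            (add_le_add (le_max_left _ _) (le_max_left _ _))
        · have : toX φ (a + b) = toX φ a + toX φ b := rfl
          rw [this]
          exact (norm_add_le _ _).trans
            (add_le_add (le_max_right _ _) (le_max_right _ _))
      neg' := fun a => by
        show max ‖φ.flip (toX φ (-a))‖ ‖toX φ (-a)‖ = max ‖φ.flip (toX φ a)‖ ‖toX φ a‖
        have h1 : toX φ (-a) = -(toX φ a) := rfl
        rw [h1, map_neg, norm_neg, norm_neg]
      eq_zero_of_map_eq_zero' := fun z hz => by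
        have : ‖toX φ z‖ = 0 := le_antisymm (hz ▸ le_max_right _ _) (norm_nonneg _)
        exact norm_eq_zero.mp this }

lemma norm_def (z : RN φ) : ‖z‖ = max ‖φ.flip (toX φ z)‖ ‖toX φ z‖ := rfl

noncomputable instance : NormedSpace ℂ (RN φ) where
  norm_smul_le s z := by
    have h1 : toX φ (s • z) = s • toX φ z := rfl
    rw [norm_def, norm_def, h1, map_smul]
    rw [norm_smul s (φ.flip (toX φ z)), norm_smul s (toX φ z)]
    exact le_of_eq (mul_max_of_nonneg _ _ (norm_nonneg s)).symm

lemma norm_toX_le (z : RN φ) : ‖toX φ z‖ ≤ ‖z‖ := le_max_right _ _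

lemma norm_flip_le (z : RN φ) : ‖φ.flip (toX φ z)‖ ≤ ‖z‖ := le_max_left _ _

lemma norm_le (z : RN φ) : ‖z‖ ≤ (‖φ.flip‖ + 1) * ‖toX φ z‖ := by
  rw [norm_def]
  refine max_le ?_ ?_
  · refine (φ.flip.le_opNorm _).trans ?_
    nlinarith [norm_nonneg (toX φ z)]
  · nlinarith [norm_nonneg (φ.flip), norm_nonneg (toX φ z)]

instance [CompleteSpace X] : CompleteSpace (RN φ) := by
  apply Metric.complete_of_cauchySeq_tendsto
  intro u hu
  have hX : CauchySeq fun n => toX φ (u n) := by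
    rw [Metric.cauchySeq_iff] at hu ⊢
    intro ε hε
    obtain ⟨N, hN⟩ := hu ε hε
    refine ⟨N, fun m hm n hn => ?_⟩
    have := hN m hm n hn
    rw [dist_eq_norm] at this ⊢
    have e : toX φ (u m) - toX φ (u n) = toX φ (u m - u n) := rfl
    rw [e]
    exact lt_of_le_of_lt (norm_toX_le φ _) this
  obtain ⟨l, hl⟩ := cauchySeq_tendsto_of_complete hX
  refine ⟨ofX φ l, ?_⟩
  rw [tendsto_iff_norm_sub_tendsto_zero] at hl ⊢
  have hb : ∀ n, ‖u n - ofX φ l‖ ≤ (‖φ.flip‖ + 1) * ‖toX φ (u n) - l‖ := by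
    intro n
    have e : toX φ (u n - ofX φ l) = toX φ (u n) - l := rfl
    exact (norm_le φ _).trans_eq (by rw [e])
  have h0 : Filter.Tendsto (fun n => (‖φ.flip‖ + 1) * ‖toX φ (u n) - l‖)
      Filter.atTop (nhds 0) := by
    have := hl.const_mul (‖φ.flip‖ + 1)
    simpa using this
  exact squeeze_zero (fun n => norm_nonneg _) hb h0

/-- The action of `a : A` on the renormed space. -/
noncomputable def act (hφmul : ∀ a b : A, φ (a * b) = φ a * φ b) (a : A) :
    RN φ →L[ℂ] RN φ :=
  LinearMap.mkContinuous
    { toFun := fun z => ofX φ (φ a (toX φ z))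
      map_add' := fun x y => by
        show ofX φ (φ a (toX φ x + toX φ y)) = _
        rw [map_add]; rfl
      map_smul' := fun c x => by
        show ofX φ (φ a (c • toX φ x)) = _
        rw [map_smul]; rfl }
    ‖a‖
    (by
      intro z
      show ‖ofX φ (φ a (toX φ z))‖ ≤ ‖a‖ * ‖z‖
      rw [norm_def]
      refine max_le ?_ ?_
      · -- ‖φ.flip (φ a (toX φ z))‖ ≤ ‖a‖ * ‖z‖
        have e : toX φ (ofX φ (φ a (toX φ z))) = φ a (toX φ z) := rfl
        rw [e]
        refine ContinuousLinearMap.opNorm_le_bound _ (by positivity) fun c => ?_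
        have e2 : φ.flip (φ a (toX φ z)) c = φ.flip (toX φ z) (c * a) := by
          simp only [ContinuousLinearMap.flip_apply]
          rw [hφmul c a, ContinuousLinearMap.mul_apply]
        rw [e2]
        calc ‖φ.flip (toX φ z) (c * a)‖ ≤ ‖φ.flip (toX φ z)‖ * ‖c * a‖ :=
              ContinuousLinearMap.le_opNorm _ _
        _ ≤ ‖z‖ * (‖c‖ * ‖a‖) := by
            refine mul_le_mul (norm_flip_le φ z) (norm_mul_le _ _) (norm_nonneg _)
              (norm_nonneg _)
        _ = ‖a‖ * ‖z‖ * ‖c‖ := by ring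
      · have e : toX φ (ofX φ (φ a (toX φ z))) = φ.flip (toX φ z) a := rfl
        rw [e]
        calc ‖φ.flip (toX φ z) a‖ ≤ ‖φ.flip (toX φ z)‖ * ‖a‖ :=
              ContinuousLinearMap.le_opNorm _ _
        _ ≤ ‖z‖ * ‖a‖ := mul_le_mul_of_nonneg_right (norm_flip_le φ z) (norm_nonneg _)
        _ = ‖a‖ * ‖z‖ := mul_comm _ _)

lemma act_apply (hφmul : ∀ a b : A, φ (a * b) = φ a * φ b) (a : A) (z : RN φ) :
    act φ hφmul a z = ofX φ (φ a (toX φ z)) := rfl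

lemma act_norm_le (hφmul : ∀ a b : A, φ (a * b) = φ a * φ b) (a : A) (z : RN φ) :
    ‖act φ hφmul a z‖ ≤ ‖a‖ * ‖z‖ := by
  calc ‖act φ hφmul a z‖ ≤ ‖act φ hφmul a‖ * ‖z‖ := ContinuousLinearMap.le_opNorm _ _
  _ ≤ ‖a‖ * ‖z‖ := by
      refine mul_le_mul_of_nonneg_right ?_ (norm_nonneg _)
      exact LinearMap.mkContinuous_norm_le _ (norm_nonneg a) _


/-- `ofX` as a continuous linear map. -/
noncomputable def ofXL : X →L[ℂ] RN φ :=
  LinearMap.mkContinuous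
    { toFun := ofX φ
      map_add' := fun _ _ => rfl
      map_smul' := fun _ _ => rfl }
    (‖φ.flip‖ + 1)
    (fun z => by
      have := norm_le φ (ofX φ z)
      exact this)

lemma ofXL_apply (z : X) : ofXL φ z = ofX φ z := rfl

end RN

end Renorm

section Positivity

open scoped ComplexOrder

variable {A : Type*} [CStarAlgebra A] [Nontrivial A]
variable [PartialOrder A] [StarOrderedRing A]

/-- A unital contractive linear functional on a C*-algebra is real on selfadjoints. -/
theorem omega_im_eq_zero (ω : A → ℂ)
    (hadd : ∀ a b : A, ω (a + b) = ω a + ω b)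
    (hsmul : ∀ (c : ℂ) (a : A), ω (c • a) = c * ω a)
    (hbound : ∀ a : A, ‖ω a‖ ≤ ‖a‖) (hone : ω 1 = 1)
    {h : A} (hh : IsSelfAdjoint h) : (ω h).im = 0 := by
  have key : ∀ t : ℝ, 2 * (ω h).im * t ≤ ‖h‖ ^ 2 := by
    intro t
    set w : ℂ := (t : ℂ) * Complex.I with hw
    have hx : ω (h + w • 1) = ω h + w := by
      rw [hadd, hsmul, hone, mul_one]
    have hnorm : ‖h + w • (1 : A)‖ ^ 2 ≤ ‖h‖ ^ 2 + t ^ 2 := by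
      have hstar : star (h + w • (1 : A)) = h + (-w) • 1 := by
        rw [star_add, star_smul, star_one, hh.star_eq]
        congr 1
        rw [hw]
        simp [Complex.ext_iff]
      have hmul : star (h + w • (1 : A)) * (h + w • 1) = h * h + ((t : ℂ) ^ 2) • 1 := by
        rw [hstar]
        have hww : -w * w = (t : ℂ) ^ 2 := by
          rw [hw]; ring_nf; rw [Complex.I_sq]; ring
        simp only [add_mul, mul_add, smul_add, smul_mul_assoc, mul_smul_comm, one_mul,
          mul_one, smul_smul, mul_neg, neg_mul, neg_neg, neg_smul]
        have e : w • -(w • (1 : A)) = ((t : ℂ) ^ 2) • 1 := by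
          rw [smul_neg, smul_smul, ← neg_smul, ← neg_mul, hww]
        rw [e]
        abel
      have h1 : ‖h + w • (1 : A)‖ ^ 2 = ‖star (h + w • (1 : A)) * (h + w • 1)‖ := by
        rw [CStarRing.norm_star_mul_self]; ring
      rw [h1, hmul]
      calc ‖h * h + ((t : ℂ) ^ 2) • (1 : A)‖ ≤ ‖h * h‖ + ‖((t : ℂ) ^ 2) • (1 : A)‖ :=
            norm_add_le _ _
      _ ≤ ‖h‖ ^ 2 + t ^ 2 := by
          have e1 : ‖h * h‖ ≤ ‖h‖ ^ 2 := by
            rw [sq]; exact norm_mul_le _ _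
          have e2 : ‖((t : ℂ) ^ 2) • (1 : A)‖ = t ^ 2 := by
            rw [norm_smul, norm_one, mul_one, norm_pow]
            simp [sq_abs]
          linarith
    have hb := hbound (h + w • 1)
    rw [hx] at hb
    have hsq : ‖ω h + w‖ ^ 2 ≤ ‖h‖ ^ 2 + t ^ 2 := by
      have := pow_le_pow_left₀ (norm_nonneg (ω h + w)) hb 2
      linarith
    have hre : ‖ω h + w‖ ^ 2 = (ω h).re ^ 2 + ((ω h).im + t) ^ 2 := by
      rw [Complex.sq_norm, Complex.normSq_apply]
      simp [hw]
      ring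
    rw [hre] at hsq
    nlinarith
  by_contra him
  have hne : 2 * (ω h).im ≠ 0 := mul_ne_zero two_ne_zero him
  have h1 := key ((‖h‖ ^ 2 + 1) / (2 * (ω h).im))
  have h2 : 2 * (ω h).im * ((‖h‖ ^ 2 + 1) / (2 * (ω h).im)) = ‖h‖ ^ 2 + 1 := by
    field_simp
  rw [h2] at h1
  linarith

theorem omega_pos (ω : A → ℂ)
    (hadd : ∀ a b : A, ω (a + b) = ω a + ω b)
    (hsmul : ∀ (c : ℂ) (a : A), ω (c • a) = c * ω a)
    (hbound : ∀ a : A, ‖ω a‖ ≤ ‖a‖) (hone : ω 1 = 1)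
    (a : A) : 0 ≤ ω (star a * a) := by
  set b : A := star a * a with hb
  have hsa : IsSelfAdjoint b := IsSelfAdjoint.star_mul_self a
  have him : (ω b).im = 0 := omega_im_eq_zero ω hadd hsmul hbound hone hsa
  -- ‖‖b‖•1 - b‖ ≤ ‖b‖
  have hnn : (0 : A) ≤ b := star_mul_self_nonneg a
  have hle : b ≤ algebraMap ℝ A ‖b‖ := IsSelfAdjoint.le_algebraMap_norm_self hsa
  have h2 : (0 : A) ≤ algebraMap ℝ A ‖b‖ - b := sub_nonneg.mpr hle
  have h3 : algebraMap ℝ A ‖b‖ - b ≤ algebraMap ℝ A ‖b‖ := sub_le_self _ hnn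
  have h4 : ‖algebraMap ℝ A ‖b‖ - b‖ ≤ ‖algebraMap ℝ A ‖b‖‖ :=
    CStarAlgebra.norm_le_norm_of_nonneg_of_le h2 h3
  have h5 : ‖algebraMap ℝ A ‖b‖‖ = ‖b‖ := by
    rw [norm_algebraMap]
    simp [norm_one]
  -- ω of it
  have hsubval : ω (algebraMap ℝ A ‖b‖ - b) = (‖b‖ : ℂ) - ω b := by
    have e0 : algebraMap ℝ A ‖b‖ - b = ((‖b‖ : ℂ)) • (1 : A) + (-1 : ℂ) • b := by
      rw [Algebra.algebraMap_eq_smul_one, sub_eq_add_neg, Complex.coe_smul]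
      congr 1
      simp
    rw [e0, hadd, hsmul, hsmul, hone]
    ring
  have h6 : ‖(‖b‖ : ℂ) - ω b‖ ≤ ‖b‖ := by
    rw [← hsubval]
    exact (hbound _).trans (h4.trans_eq h5)
  -- conclude
  have hre : (ω b).re ≥ 0 := by
    have e1 : ‖(‖b‖ : ℂ) - ω b‖ ≥ |‖b‖ - (ω b).re| := by
      have := Complex.abs_re_le_norm ((‖b‖ : ℂ) - ω b)
      simpa using this
    have := abs_le.mp (le_trans e1 h6)
    linarith [this.1]
  rw [Complex.le_def]
  exact ⟨by simpa using hre, by simp [him]⟩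

theorem omega_cs (ω : A → ℂ)
    (hadd : ∀ a b : A, ω (a + b) = ω a + ω b)
    (hsmul : ∀ (c : ℂ) (a : A), ω (c • a) = c * ω a)
    (hbound : ∀ a : A, ‖ω a‖ ≤ ‖a‖) (hone : ω 1 = 1)
    (a₀ : A) (hz : ω (star a₀ * a₀) = 0) : ω a₀ = 0 := by
  set u : ℂ := ω a₀ with hu
  set v : ℂ := ω (star a₀) with hv
  -- ω (star a₀) = conj u
  have hconj : v = starRingEnd ℂ u := by
    have hh : IsSelfAdjoint (a₀ + star a₀) := by
      rw [IsSelfAdjoint]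
      simp [star_add, add_comm]
    have hk : IsSelfAdjoint (Complex.I • (a₀ - star a₀)) := by
      rw [IsSelfAdjoint]
      simp [star_smul, star_sub, smul_sub, Complex.conj_I]
      abel
    have e1 : ω (a₀ + star a₀) = u + v := by rw [hadd, hu, hv]
    have e2 : ω (Complex.I • (a₀ - star a₀)) = Complex.I * (u - v) := by
      rw [hsmul]
      congr 1
      have e3 : a₀ - star a₀ = a₀ + (-1 : ℂ) • star a₀ := by
        simp [sub_eq_add_neg]
      rw [e3, hadd, hsmul, ← hu, ← hv]
      ring
    have i1 := omega_im_eq_zero ω hadd hsmul hbound hone hh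
    rw [e1] at i1
    have i2 := omega_im_eq_zero ω hadd hsmul hbound hone hk
    rw [e2] at i2
    have i1' : u.im + v.im = 0 := by simpa [Complex.add_im] using i1
    have i2' : u.re - v.re = 0 := by
      simpa [Complex.mul_im, Complex.sub_re, Complex.sub_im] using i2
    apply Complex.ext
    · simp only [Complex.conj_re]; linarith
    · simp only [Complex.conj_im]; linarith
  have hq := omega_pos ω hadd hsmul hbound hone (a₀ + (-u) • 1)
  have hprod : star (a₀ + (-u) • (1 : A)) * (a₀ + (-u) • 1)
      = star a₀ * a₀ + (-u) • star a₀ + (star (-u)) • a₀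
        + ((-u) * star (-u)) • (1 : A) := by
    rw [star_add, star_smul, star_one]
    simp only [add_mul, mul_add, smul_add, smul_mul_assoc, mul_smul_comm, one_mul,
      mul_one, smul_smul]
    abel
  have hval : ω (star (a₀ + (-u) • (1 : A)) * (a₀ + (-u) • 1))
      = -(u * starRingEnd ℂ u) := by
    rw [hprod, hadd, hadd, hadd, hsmul, hsmul, hsmul, hone, hz, ← hu, ← hv, hconj]
    simp only [star_neg, Complex.star_def]
    ring
  rw [hval] at hq
  have hq2 : (0 : ℂ) ≤ -((Complex.normSq u : ℝ) : ℂ) := by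
    rwa [Complex.mul_conj] at hq
  rw [Complex.le_def] at hq2
  have h1 : Complex.normSq u ≤ 0 := by simpa using hq2.1
  have h2 : Complex.normSq u = 0 := le_antisymm h1 (Complex.normSq_nonneg u)
  exact Complex.normSq_eq_zero.mp h2

end Positivity

open scoped ENNReal ComplexOrder

/-- Let `1 < p < ∞`, `J` a set, `A` a unital C*-algebra,
`φ : A → B(ℓᵖ(J))` a unital (bounded, multiplicative) homomorphism, and `a₀ ∈ A` with
`φ(a₀) ≠ 0`. Then there are `x₀ ∈ ℓᵖ(J)` and a bounded linear functional `y₀*` on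
`ℓᵖ(J)` such that `ω(a) = y₀*(φ(a)x₀)` is a positive linear functional on `A` with
`ω(a₀* a₀) ≠ 0`. -/
theorem exists_positive_functional_nonzero
    (p : ℝ≥0∞) [Fact (1 ≤ p)] (hp1 : 1 < p) (hp2 : p ≠ ⊤)
    (J : Type*) (A : Type*) [CStarAlgebra A]
    (φ : A →L[ℂ] (lp (fun _ : J => ℂ) p →L[ℂ] lp (fun _ : J => ℂ) p))
    (hφmul : ∀ a b : A, φ (a * b) = φ a * φ b) (hφone : φ 1 = 1)
    (a₀ : A) (ha₀ : φ a₀ ≠ 0) :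
    ∃ (x₀ : lp (fun _ : J => ℂ) p) (y₀ : lp (fun _ : J => ℂ) p →L[ℂ] ℂ),
      (∀ a : A, 0 ≤ y₀ (φ (star a * a) x₀)) ∧
      y₀ (φ (star a₀ * a₀) x₀) ≠ 0 := by
  classical
  letI : PartialOrder A := CStarAlgebra.spectralOrder A
  haveI : StarOrderedRing A := CStarAlgebra.spectralOrderedRing A
  haveI : Nontrivial A := ⟨⟨a₀, 0, fun h => ha₀ (by rw [h, map_zero])⟩⟩
  let T : RN φ →L[ℂ] RN φ := RN.act φ hφmul a₀
  have hT : T ≠ 0 := by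
    intro hc
    apply ha₀
    refine ContinuousLinearMap.ext fun z => ?_
    rw [ContinuousLinearMap.zero_apply]
    have h1 : T (RN.ofX φ z) = 0 := by rw [hc]; rfl
    exact h1
  obtain ⟨x, g, hx0, hg1, hgx, hgTx⟩ := keyLemma T hT
  set ν : ℝ := ‖x‖ with hν
  have hν0 : (0 : ℝ) < ν := norm_pos_iff.mpr hx0
  let y₀ : lp (fun _ : J => ℂ) p →L[ℂ] ℂ := ((ν⁻¹ : ℝ) : ℂ) • (g.comp (RN.ofXL φ))
  have hωeq : ∀ a : A, y₀ (φ a (RN.toX φ x)) =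
      ((ν⁻¹ : ℝ) : ℂ) * g (RN.act φ hφmul a x) := fun a => rfl
  set ω : A → ℂ := fun a => y₀ (φ a (RN.toX φ x)) with hω
  have hadd : ∀ a b : A, ω (a + b) = ω a + ω b := by
    intro a b
    simp only [hω, map_add, ContinuousLinearMap.add_apply]
  have hsmul : ∀ (c : ℂ) (a : A), ω (c • a) = c * ω a := by
    intro c a
    simp only [hω, map_smul, ContinuousLinearMap.smul_apply, smul_eq_mul]
  have hbound : ∀ a : A, ‖ω a‖ ≤ ‖a‖ := by
    intro a
    rw [hω]
    simp only []
    rw [hωeq a, norm_mul]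
    have e1 : ‖((ν⁻¹ : ℝ) : ℂ)‖ = ν⁻¹ := by
      rw [Complex.norm_real, Real.norm_eq_abs, abs_of_nonneg (inv_nonneg.mpr hν0.le)]
    have e2 : ‖g (RN.act φ hφmul a x)‖ ≤ ‖a‖ * ν := by
      calc ‖g (RN.act φ hφmul a x)‖ ≤ ‖g‖ * ‖RN.act φ hφmul a x‖ := g.le_opNorm _
      _ = ‖RN.act φ hφmul a x‖ := by rw [hg1, one_mul]
      _ ≤ ‖a‖ * ν := RN.act_norm_le φ hφmul a x
    rw [e1]
    calc ν⁻¹ * ‖g (RN.act φ hφmul a x)‖ ≤ ν⁻¹ * (‖a‖ * ν) := by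
          exact mul_le_mul_of_nonneg_left e2 (inv_nonneg.mpr hν0.le)
    _ = ‖a‖ := by
          rw [mul_comm ‖a‖ ν, ← mul_assoc, inv_mul_cancel₀ hν0.ne', one_mul]
  have hone : ω 1 = 1 := by
    rw [hω]
    simp only []
    rw [hωeq 1]
    have hact1 : RN.act φ hφmul 1 x = x := by
      rw [RN.act_apply, hφone]
      rfl
    rw [hact1, hgx]
    have : ((ν⁻¹ : ℝ) : ℂ) * ((ν : ℝ) : ℂ) = 1 := by
      norm_cast
      field_simp
    exact this
  refine ⟨RN.toX φ x, y₀, ?_, ?_⟩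
  · intro a
    exact omega_pos ω hadd hsmul hbound hone a
  · intro hc
    have h0 : ω a₀ = 0 := omega_cs ω hadd hsmul hbound hone a₀ hc
    rw [hω] at h0
    simp only [] at h0
    rw [hωeq a₀] at h0
    rcases mul_eq_zero.mp h0 with h1 | h1
    · have : (ν⁻¹ : ℝ) = 0 := by exact_mod_cast h1
      exact absurd this (by positivity)
    · exact hgTx h1
end
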